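/- Let d ≥ 2. Every combinatorial description (CD, H) of W_d that is compatible with RT via S_n-equivariant surjections p_n : RT(n) → CD(n) satisfies that each p_n is a bijection; in other words, in dimension d ≠ 1 the rooted trees are the only combinatorial description of W_d compatible with RT. -/

import Mathlib

open Finset

/-- The type of smooth maps from `ℝ^d` to `ℝ^d` (i.e. `C_d = C^∞(ℝ^d, ℝ^d)`). -/
def SmoothMapD (d : ℕ) : Type :=
  {f : (Fin d → ℝ) → (Fin d → ℝ) // ∀ k : ℕ, ContDiff ℝ k f}

/-- A rooted tree on a finite vertex set `V`: a set `E` of (parent, child) edges together with a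
root, such that every non-root vertex has a unique parent, the root has no parent, and every
vertex reaches the root by iteratively passing to its parent. -/
structure RTree (V : Type) [Fintype V] [DecidableEq V] where
  E : Finset (V × V)
  root : V
  parent_unique : ∀ v : V, v ≠ root → ∃! u : V, (u, v) ∈ E
  root_no_parent : ∀ u : V, (u, root) ∉ E
  reaches_root : ∀ v : V, Relation.ReflTransGen (fun a b : V => (b, a) ∈ E) v root

/-- The children of a vertex `v` of a rooted tree: `C_v = {w | (v, w) ∈ E}`. -/
def RTree.children {V : Type} [Fintype V] [DecidableEq V] (τ : RTree V) (v : V) :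
    Finset V :=
  Finset.univ.filter (fun w => (v, w) ∈ τ.E)

/-- Partial derivative `∂_i` of a scalar function on `ℝ^d`. -/
noncomputable def pd {d : ℕ} (i : Fin d) (g : (Fin d → ℝ) → ℝ) : (Fin d → ℝ) → ℝ :=
  fun x => fderiv ℝ g x (Pi.single i 1)

/-- Iterated partial derivatives along a list of directions. -/
noncomputable def pdList {d : ℕ} (l : List (Fin d)) (g : (Fin d → ℝ) → ℝ) : (Fin d → ℝ) → ℝ :=
  l.foldr pd g

/-- The elementary differential of a rooted tree, in closed form: the `j`-th component of
`F(τ)((f^v)_v)(x)` is the sum over all choices of an index `idx v ∈ [d]` for each vertex `v`,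
subject to `idx root = j`, of the product over all vertices `v` of
`∂_{idx c₁} ⋯ ∂_{idx c_k} (f^v)_{idx v} (x)` where `c₁, …, c_k` are the children of `v`.
For smooth inputs this agrees with the usual recursive definition. -/
noncomputable def elemDiff {V : Type} [Fintype V] [DecidableEq V] {d : ℕ} (τ : RTree V)
    (f : V → ((Fin d → ℝ) → (Fin d → ℝ))) : (Fin d → ℝ) → (Fin d → ℝ) :=
  fun x j =>
    ∑ idx : V → Fin d,
      if idx τ.root = j then
        ∏ v : V, pdList ((τ.children v).toList.map idx) (fun y => f v y (idx v)) x
      else 0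

/-- The elementary differential `F(τ)` evaluated on smooth maps. -/
noncomputable def Fel (d : ℕ) {V : Type} [Fintype V] [DecidableEq V] (τ : RTree V)
    (f : V → SmoothMapD d) : (Fin d → ℝ) → (Fin d → ℝ) :=
  elemDiff τ (fun v => (f v).1)
/-- `W_d(n)`: the span of the elementary differentials of rooted trees on `n` vertices, inside
the space of functionals `(C_d)^n → C_d`. -/
noncomputable def Wspace (d n : ℕ) :
    Submodule ℝ ((Fin n → SmoothMapD d) → (Fin d → ℝ) → (Fin d → ℝ)) :=
  Submodule.span ℝ (Set.range (fun τ : RTree (Fin n) => Fel d τ))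
/-- The action of a permutation `σ ∈ S_n` on a functional, permuting its `n` inputs. -/
def permAct {d n : ℕ} (σ : Equiv.Perm (Fin n))
    (w : (Fin n → SmoothMapD d) → (Fin d → ℝ) → (Fin d → ℝ)) :
    (Fin n → SmoothMapD d) → (Fin d → ℝ) → (Fin d → ℝ) :=
  fun f => w (fun i => f (σ i))

lemma hasFDerivAt_Cexp (d : ℕ) (γ : Fin d → ℝ) (x : Fin d → ℝ) (C : ℝ) :
    HasFDerivAt (fun y : Fin d → ℝ => C * Real.exp (∑ k, γ k * y k))
      ((C * Real.exp (∑ k, γ k * x k)) •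
        (∑ k, γ k • ContinuousLinearMap.proj (R := ℝ) (φ := fun _ : Fin d => ℝ) k)) x := by
  set L : (Fin d → ℝ) →L[ℝ] ℝ :=
    ∑ k, γ k • ContinuousLinearMap.proj (R := ℝ) (φ := fun _ : Fin d => ℝ) k with hL
  have hLapp : ∀ y, L y = ∑ k, γ k * y k := by
    intro y; simp [hL, ContinuousLinearMap.sum_apply]
  have h1 : HasFDerivAt (fun y : Fin d → ℝ => Real.exp (L y)) (Real.exp (L x) • L) x :=
    (Real.hasDerivAt_exp (L x)).comp_hasFDerivAt x L.hasFDerivAt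
  have h2 := h1.const_mul C
  have h3 : (fun y : Fin d → ℝ => C * Real.exp (L y)) = fun y => C * Real.exp (∑ k, γ k * y k) := by
    funext y; rw [hLapp]
  rw [h3, hLapp x] at h2
  rw [smul_smul] at h2
  exact h2

lemma pd_Cexp (d : ℕ) (γ : Fin d → ℝ) (C : ℝ) (i : Fin d) :
    pd i (fun y : Fin d → ℝ => C * Real.exp (∑ k, γ k * y k))
      = fun x => C * γ i * Real.exp (∑ k, γ k * x k) := by
  funext x
  have h := (hasFDerivAt_Cexp d γ x C).fderiv
  simp only [pd, h]
  simp [ContinuousLinearMap.sum_apply, Pi.single_apply, mul_ite, Finset.sum_ite_eq']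
  ring

lemma pdList_Cexp (d : ℕ) (γ : Fin d → ℝ) (C : ℝ) (l : List (Fin d)) :
    pdList l (fun y : Fin d → ℝ => C * Real.exp (∑ k, γ k * y k))
      = fun x => C * (l.map γ).prod * Real.exp (∑ k, γ k * x k) := by
  induction l with
  | nil => simp [pdList]
  | cons i l ih =>
    show pd i (pdList l _) = _
    rw [ih]
    rw [pd_Cexp d γ (C * (l.map γ).prod) i]
    funext x
    simp [List.map_cons]
    ring

noncomputable def expFun {d : ℕ} (c γ : Fin d → ℝ) : (Fin d → ℝ) → (Fin d → ℝ) :=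
  fun y i => c i * Real.exp (∑ k, γ k * y k)

lemma expFun_smooth {d : ℕ} (c γ : Fin d → ℝ) (k : ℕ) : ContDiff ℝ k (expFun c γ) := by
  rw [contDiff_pi]
  intro i
  exact contDiff_const.mul (Real.contDiff_exp.comp
    (ContDiff.sum fun m _ => contDiff_const.mul (contDiff_apply ℝ ℝ m)))

noncomputable def smoothExp {d : ℕ} (c γ : Fin d → ℝ) : SmoothMapD d :=
  ⟨expFun c γ, expFun_smooth c γ⟩

lemma elemDiff_exp {V : Type} [Fintype V] [DecidableEq V] {d : ℕ} (τ : RTree V)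
    (c γ : V → Fin d → ℝ) (j : Fin d) :
    elemDiff τ (fun v => expFun (c v) (γ v)) 0 j =
      ∑ idx : V → Fin d, (if idx τ.root = j then
        ∏ v : V, (c v (idx v) * ∏ w ∈ τ.children v, γ v (idx w)) else 0) := by
  unfold elemDiff
  refine Finset.sum_congr rfl fun idx _ => ?_
  split
  · refine Finset.prod_congr rfl fun v _ => ?_
    have : (fun y => expFun (c v) (γ v) y (idx v))
        = fun y : Fin d → ℝ => c v (idx v) * Real.exp (∑ k, γ v k * y k) := rfl
    rw [this, pdList_Cexp]
    simp only [Pi.zero_apply, mul_zero, Finset.sum_const_zero, Real.exp_zero, mul_one,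
      List.map_map]
    rw [show ((τ.children v).toList.map (γ v ∘ idx)).prod
        = ∏ w ∈ τ.children v, γ v (idx w) from Finset.prod_map_toList _ _]
  · rfl

noncomputable def RTree.parentF {V : Type} [Fintype V] [DecidableEq V] (τ : RTree V)
    (v : V) : V :=
  if h : v = τ.root then τ.root else (τ.parent_unique v h).exists.choose

lemma RTree.parentF_mem {V : Type} [Fintype V] [DecidableEq V] (τ : RTree V) {v : V}
    (h : v ≠ τ.root) : (τ.parentF v, v) ∈ τ.E := by
  rw [RTree.parentF, dif_neg h]
  exact (τ.parent_unique v h).exists.choose_spec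

lemma RTree.eq_parentF {V : Type} [Fintype V] [DecidableEq V] (τ : RTree V) {u v : V}
    (h : (u, v) ∈ τ.E) : u = τ.parentF v ∧ v ≠ τ.root := by
  have hv : v ≠ τ.root := fun hv => τ.root_no_parent u (hv ▸ h)
  obtain ⟨w, -, huniq⟩ := τ.parent_unique v hv
  exact ⟨(huniq u h).trans (huniq _ (τ.parentF_mem hv)).symm, hv⟩

lemma RTree.mem_children {V : Type} [Fintype V] [DecidableEq V] (τ : RTree V) {v w : V} :
    w ∈ τ.children v ↔ (v, w) ∈ τ.E := by
  simp [RTree.children]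

lemma RTree.mem_children_iff {V : Type} [Fintype V] [DecidableEq V] (τ : RTree V) {v w : V} :
    w ∈ τ.children v ↔ w ≠ τ.root ∧ τ.parentF w = v := by
  rw [RTree.mem_children]
  constructor
  · intro h
    obtain ⟨h1, h2⟩ := τ.eq_parentF h
    exact ⟨h2, h1.symm⟩
  · rintro ⟨h1, rfl⟩
    exact τ.parentF_mem h1

lemma RTree.eq_of_root_parentF {V : Type} [Fintype V] [DecidableEq V] (τ τ' : RTree V)
    (hr : τ.root = τ'.root) (hp : ∀ v, v ≠ τ.root → τ.parentF v = τ'.parentF v) : τ = τ' := by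
  have hE : τ.E = τ'.E := by
    ext ⟨u, v⟩
    constructor
    · intro h
      obtain ⟨rfl, hv⟩ := τ.eq_parentF h
      rw [hp v hv]
      exact τ'.parentF_mem (hr ▸ hv)
    · intro h
      obtain ⟨rfl, hv⟩ := τ'.eq_parentF h
      rw [← hp v (hr ▸ hv)]
      exact τ.parentF_mem (hr ▸ hv)
  cases τ; cases τ'
  simp_all

noncomputable def S {V : Type} [Fintype V] [DecidableEq V] {d : ℕ} (τ : RTree V)
    (c γ : V → Fin d → ℝ) (j : Fin d) : ℝ :=
  ∑ idx : V → Fin d, (if idx τ.root = j then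
    ∏ v : V, (c v (idx v) * ∏ w ∈ τ.children v, γ v (idx w)) else 0)

lemma elemDiff_exp' {V : Type} [Fintype V] [DecidableEq V] {d : ℕ} (τ : RTree V)
    (c γ : V → Fin d → ℝ) (j : Fin d) :
    elemDiff τ (fun v => expFun (c v) (γ v)) 0 j = S τ c γ j :=
  elemDiff_exp τ c γ j

lemma S_eq_zero {V : Type} [Fintype V] [DecidableEq V] {d : ℕ} (τ : RTree V)
    (c γ : V → Fin d → ℝ) (j : Fin d)
    (h0 : ∀ idx : V → Fin d, idx τ.root = j →
      ∃ v, c v (idx v) * ∏ w ∈ τ.children v, γ v (idx w) = 0) : S τ c γ j = 0 := by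
  refine Finset.sum_eq_zero fun idx _ => ?_
  split
  · next hp =>
      obtain ⟨v, hv⟩ := h0 idx hp
      exact Finset.prod_eq_zero (Finset.mem_univ v) hv
  · rfl

lemma S_eq_one {V : Type} [Fintype V] [DecidableEq V] {d : ℕ} (τ : RTree V)
    (c γ : V → Fin d → ℝ) (j : Fin d) (idx₀ : V → Fin d) (hP : idx₀ τ.root = j)
    (h1 : ∀ v, c v (idx₀ v) * ∏ w ∈ τ.children v, γ v (idx₀ w) = 1)
    (h0 : ∀ idx : V → Fin d, idx τ.root = j → idx ≠ idx₀ →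
      ∃ v, c v (idx v) * ∏ w ∈ τ.children v, γ v (idx w) = 0) : S τ c γ j = 1 := by
  rw [S, Finset.sum_eq_single idx₀]
  · rw [if_pos hP]
    exact Finset.prod_eq_one fun v _ => h1 v
  · intro b _ hb
    split
    · next hp =>
        obtain ⟨v, hv⟩ := h0 b hp hb
        exact Finset.prod_eq_zero (Finset.mem_univ v) hv
    · rfl
  · intro habs
    exact absurd (Finset.mem_univ idx₀) habs

theorem elemDiff_inj {V : Type} [Fintype V] [DecidableEq V] {d : ℕ} (hd : 2 ≤ d)
    (τ τ' : RTree V)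
    (h : ∀ (c γ : V → Fin d → ℝ) (j : Fin d), S τ c γ j = S τ' c γ j) : τ = τ' := by
  by_contra hne
  have hcase : ¬ (τ.root = τ'.root ∧ ∀ v, v ≠ τ.root → τ.parentF v = τ'.parentF v) :=
    fun hh => hne (RTree.eq_of_root_parentF τ τ' hh.1 hh.2)
  set z : Fin d := ⟨0, by omega⟩ with hz
  set o : Fin d := ⟨1, by omega⟩ with ho
  have hzo : z ≠ o := by simp [hz, ho, Fin.ext_iff]
  by_cases hr : τ.root = τ'.root
  · -- roots equal, parents differ somewhere
    push_neg at hcase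
    obtain ⟨v0, hv0, hpar⟩ := hcase hr
    set u : V := τ.parentF v0 with hu
    set u' : V := τ'.parentF v0 with hu'
    set c : V → Fin d → ℝ :=
      fun w => if w = v0 then Pi.single z 1 else Pi.single z 1 + Pi.single o 1 with hc
    set γ : V → Fin d → ℝ :=
      fun w => if w = u then Pi.single o 1 else Pi.single z 1 with hγ
    have key := h c γ z
    have hL : S τ c γ z = 0 := by
      refine S_eq_zero τ c γ z fun idx _ => ?_
      by_cases hcz : idx v0 = z
      · refine ⟨u, ?_⟩
        have hmem : v0 ∈ τ.children u := τ.mem_children_iff.2 ⟨hv0, rfl⟩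
        have : γ u (idx v0) = 0 := by
          rw [hγ]; simp only [if_pos rfl]
          rw [hcz]
          exact Pi.single_eq_of_ne hzo 1
        rw [Finset.prod_eq_zero hmem this, mul_zero]
      · refine ⟨v0, ?_⟩
        have : c v0 (idx v0) = 0 := by
          rw [hc]; simp only [if_pos rfl]
          exact Pi.single_eq_of_ne hcz 1
        rw [this, zero_mul]
    have hR : S τ' c γ z = 1 := by
      set idx₀ : V → Fin d := fun w => if w ≠ τ'.root ∧ τ'.parentF w = u then o else z with hidx
      have hsingle : ∀ w, w ≠ τ'.root → γ (τ'.parentF w) = Pi.single (idx₀ w) 1 := by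
        intro w hw
        by_cases hpu : τ'.parentF w = u
        · rw [hγ, hidx]
          simp only [if_pos hpu, if_pos (And.intro hw hpu)]
        · rw [hγ, hidx]
          simp only [if_neg hpu, if_neg (fun hh : w ≠ τ'.root ∧ τ'.parentF w = u => hpu hh.2)]
      have hval : ∀ w, idx₀ w = z ∨ idx₀ w = o := by
        intro w; rw [hidx]; dsimp only; split
        · exact Or.inr rfl
        · exact Or.inl rfl
      refine S_eq_one τ' c γ z idx₀ ?_ ?_ ?_
      · rw [hidx]
        simp
      · intro v
        have h1 : c v (idx₀ v) = 1 := by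
          by_cases hvv : v = v0
          · subst hvv
            have : idx₀ v = z := by
              rw [hidx]
              refine if_neg fun hh => ?_
              exact hpar (hu' ▸ hh.2.symm ▸ rfl)
            rw [hc, this]
            simp
          · rw [hc]
            simp only [if_neg hvv]
            rcases hval v with hv | hv <;> rw [hv] <;> simp [Pi.single_apply, hzo, hzo.symm]
        have h2 : ∀ w ∈ τ'.children v, γ v (idx₀ w) = 1 := by
          intro w hw
          obtain ⟨hwr, hwp⟩ := τ'.mem_children_iff.1 hw
          have := hsingle w hwr
          rw [hwp] at this
          rw [this]
          simp
        rw [h1, Finset.prod_eq_one h2, mul_one]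
      · intro idx hroot hne'
        obtain ⟨w, hw⟩ := Function.ne_iff.1 hne'
        have hwr : w ≠ τ'.root := by
          intro hwr
          apply hw
          rw [hwr, hroot, hidx]
          simp
        refine ⟨τ'.parentF w, ?_⟩
        have hmem : w ∈ τ'.children (τ'.parentF w) := τ'.mem_children_iff.2 ⟨hwr, rfl⟩
        have : γ (τ'.parentF w) (idx w) = 0 := by
          rw [hsingle w hwr]
          exact Pi.single_eq_of_ne hw 1
        rw [Finset.prod_eq_zero hmem this, mul_zero]
    rw [hL, hR] at key
    exact zero_ne_one key
  · -- roots differ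
    set c : V → Fin d → ℝ :=
      fun w => if w = τ.root then Pi.single o 1 else Pi.single z 1 with hc
    set γ : V → Fin d → ℝ := fun _ => Pi.single z 1 + Pi.single o 1 with hγ
    have key := h c γ z
    have hL : S τ c γ z = 0 := by
      refine S_eq_zero τ c γ z fun idx hroot => ?_
      refine ⟨τ.root, ?_⟩
      have : c τ.root (idx τ.root) = 0 := by
        rw [hc, hroot]
        simp only [if_pos rfl]
        exact Pi.single_eq_of_ne hzo 1
      rw [this, zero_mul]
    have hR : S τ' c γ z = 1 := by
      set idx₀ : V → Fin d := fun w => if w = τ.root then o else z with hidx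
      have hcs : ∀ w, c w = Pi.single (idx₀ w) 1 := by
        intro w
        rw [hc, hidx]
        dsimp only
        split <;> rfl
      have hval : ∀ w, idx₀ w = z ∨ idx₀ w = o := by
        intro w; rw [hidx]; dsimp only; split
        · exact Or.inr rfl
        · exact Or.inl rfl
      refine S_eq_one τ' c γ z idx₀ ?_ ?_ ?_
      · rw [hidx]
        exact if_neg fun hh => hr hh.symm
      · intro v
        have h1 : c v (idx₀ v) = 1 := by rw [hcs]; simp
        have h2 : ∀ w ∈ τ'.children v, γ v (idx₀ w) = 1 := by
          intro w _
          rcases hval w with hv | hv <;> rw [hγ, hv] <;>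
            simp [Pi.single_apply, hzo, hzo.symm]
        rw [h1, Finset.prod_eq_one h2, mul_one]
      · intro idx _ hne'
        obtain ⟨w, hw⟩ := Function.ne_iff.1 hne'
        refine ⟨w, ?_⟩
        have : c w (idx w) = 0 := by
          rw [hcs]
          exact Pi.single_eq_of_ne hw 1
        rw [this, zero_mul]
    rw [hL, hR] at key
    exact zero_ne_one key

/-- In dimension `d ≥ 2`, every combinatorial description `(CD, H)` of `W_d` that is
compatible with `RT` via `S_n`-equivariant surjections `p_n : RT(n) → CD(n)` satisfies that
each `p_n` is a bijection: the rooted trees are the only combinatorial description of `W_d`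
compatible with `RT`. -/
theorem rooted_trees_only_description_compatible_with_RT (d : ℕ) (hd : 2 ≤ d)
    (CD : ℕ → Type) (act : ∀ n, Equiv.Perm (Fin n) → CD n → CD n)
    (H : ∀ n, CD n → ((Fin n → SmoothMapD d) → (Fin d → ℝ) → (Fin d → ℝ)))
    (p : ∀ n, RTree (Fin n) → CD n)
    (hact_one : ∀ n c, act n 1 c = c)
    (hact_mul : ∀ n σ π c, act n (σ * π) c = act n σ (act n π c))
    (hH_equiv : ∀ n σ c, H n (act n σ c) = permAct σ (H n c))
    (hH_span : ∀ n, Submodule.span ℝ (Set.range (H n)) = Wspace d n)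
    (hp_surj : ∀ n, Function.Surjective (p n))
    (hp_equiv : ∀ (n : ℕ) (σ : Equiv.Perm (Fin n)) (τ τ' : RTree (Fin n)),
      τ'.E = τ.E.image (fun e => (σ e.1, σ e.2)) → τ'.root = σ τ.root →
      p n τ' = act n σ (p n τ))
    (hp_comp : ∀ (n : ℕ) (τ : RTree (Fin n)), Fel d τ = H n (p n τ)) :
    ∀ n, Function.Bijective (p n) := by
  intro n
  refine ⟨fun τ τ' hpp => ?_, hp_surj n⟩
  have hFel : Fel d τ = Fel d τ' := by rw [hp_comp, hp_comp, hpp]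
  refine elemDiff_inj hd τ τ' fun c γ j => ?_
  have hkey := congrFun (congrFun (congrFun hFel (fun v => smoothExp (c v) (γ v))) 0) j
  rw [← elemDiff_exp' τ c γ j, ← elemDiff_exp' τ' c γ j]
  exact hkey
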